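/- Let μ > 0, α > 0, N ≥ 1, and ω > α²/N². Set ζ = (1/(μ√ω)) arctanh(α/(N√ω)) and define on each halfline ψ_j(x) = φ_ω(x + ζ) for j = 1,…,N, where φ_ω(x) = [(μ+1)ω]^{1/(2μ)} sech^{1/μ}(μ√ω x). Then the Kirchhoff-delta vertex condition Σ_{j=1}^N ψ_j'(0) = −α ψ_1(0) holds. -/

import Mathlib

open Real

/-- The soliton profile `φ_ω(x) = ((μ+1)ω)^(1/(2μ)) sech^(1/μ)(μ√ω x)`. -/
noncomputable def phi (μ ω : ℝ) (x : ℝ) : ℝ :=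
  ((μ + 1) * ω) ^ (1 / (2 * μ)) * Real.cosh (μ * Real.sqrt ω * x) ^ (-(1 / μ))

/-- The inverse hyperbolic tangent, `arctanh s = (1/2) log((1+s)/(1-s))`. -/
noncomputable def arctanh (s : ℝ) : ℝ := (1 / 2) * Real.log ((1 + s) / (1 - s))

theorem symmetric_state_vertex_condition (μ α : ℝ) (N : ℕ) (hμ : 0 < μ) (hα : 0 < α)
    (hN : 1 ≤ N) (ω : ℝ) (hω : α ^ 2 / N ^ 2 < ω) :
    let ζ : ℝ := 1 / (μ * Real.sqrt ω) * arctanh (α / (N * Real.sqrt ω))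
    ∑ _j ∈ Finset.range N, deriv (fun x => phi μ ω (x + ζ)) 0 = -α * phi μ ω (0 + ζ) := by
  intro ζ
  have hN0 : (0:ℝ) < N := by exact_mod_cast Nat.pos_of_ne_zero (by omega)
  have hω0 : 0 < ω := lt_trans (by positivity) hω
  set sq := Real.sqrt ω with hsqdef
  have hsq : 0 < sq := Real.sqrt_pos.mpr hω0
  have hsq2 : sq ^ 2 = ω := Real.sq_sqrt hω0.le
  set s : ℝ := α / (N * sq) with hsdef
  have hs0 : 0 < s := by positivity
  have hs1 : s < 1 := by
    rw [hsdef, div_lt_one (by positivity)]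
    have h2 : α ^ 2 < ((N:ℝ) * sq) ^ 2 := by
      have := (div_lt_iff₀ (by positivity : (0:ℝ) < (N:ℝ) ^ 2)).mp hω
      nlinarith
    exact lt_of_pow_lt_pow_left₀ 2 (by positivity) h2
  -- tanh of arctanh
  have hu : (0:ℝ) < (1 + s) / (1 - s) := div_pos (by linarith) (by linarith)
  have hE2 : Real.exp (arctanh s) ^ 2 = (1 + s) / (1 - s) := by
    rw [← Real.exp_nat_mul]
    rw [show ((2:ℕ):ℝ) * arctanh s = Real.log ((1+s)/(1-s)) by rw [arctanh]; ring]
    exact Real.exp_log hu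
  have hEpos : 0 < Real.exp (arctanh s) := Real.exp_pos _
  have htanh : Real.tanh (arctanh s) = s := by
    rw [Real.tanh_eq_sinh_div_cosh, Real.sinh_eq, Real.cosh_eq]
    rw [Real.exp_neg]
    set E := Real.exp (arctanh s) with hE
    have h1s : (1:ℝ) - s ≠ 0 := by linarith
    have key : E ^ 2 * (1 - s) = 1 + s := by
      rw [hE2]; field_simp
    have hEne : E ≠ 0 := ne_of_gt hEpos
    field_simp
    nlinarith [key]
  -- sinh = s * cosh at t = arctanh s
  have hsinh : Real.sinh (arctanh s) = s * Real.cosh (arctanh s) := by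
    have := htanh
    rw [Real.tanh_eq_sinh_div_cosh] at this
    field_simp at this
    linarith [this]
  set k : ℝ := μ * sq with hk
  have hk0 : k ≠ 0 := by positivity
  have hkζ : k * ζ = arctanh s := by
    show μ * sq * (1 / (μ * sq) * arctanh s) = arctanh s
    rw [← mul_assoc, mul_one_div_cancel (by positivity), one_mul]
  set p : ℝ := -(1/μ) with hp
  set C : ℝ := ((μ + 1) * ω) ^ (1 / (2 * μ)) with hC
  set t : ℝ := arctanh s with ht
  have hcoshpos : 0 < Real.cosh t := Real.cosh_pos _
  -- derivative
  have h1 : HasDerivAt (fun x : ℝ => k * (x + ζ)) k 0 := by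
    simpa using ((hasDerivAt_id (0:ℝ)).add_const ζ).const_mul k
  have h2 : HasDerivAt (fun x : ℝ => Real.cosh (k * (x + ζ))) (Real.sinh (k * (0 + ζ)) * k) 0 :=
    h1.cosh
  have h3 : HasDerivAt (fun x : ℝ => Real.cosh (k * (x + ζ)) ^ p)
      ((Real.sinh (k * (0 + ζ)) * k) * p * Real.cosh (k * (0 + ζ)) ^ (p - 1)) 0 :=
    h2.rpow_const (Or.inl (ne_of_gt (Real.cosh_pos _)))
  have h4 : HasDerivAt (fun x : ℝ => phi μ ω (x + ζ))
      (C * ((Real.sinh (k * (0 + ζ)) * k) * p * Real.cosh (k * (0 + ζ)) ^ (p - 1))) 0 := by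
    unfold phi
    exact h3.const_mul C
  have hder : deriv (fun x => phi μ ω (x + ζ)) 0
      = C * ((Real.sinh t * k) * p * Real.cosh t ^ (p - 1)) := by
    rw [h4.deriv, zero_add, hkζ]
  rw [Finset.sum_const, Finset.card_range, hder]
  have hphi : phi μ ω (0 + ζ) = C * Real.cosh t ^ p := by
    unfold phi
    rw [← hk, zero_add, hkζ]
  rw [hphi]
  have hrw : Real.cosh t ^ (p - 1) = Real.cosh t ^ p / Real.cosh t := by
    rw [Real.rpow_sub_one (ne_of_gt hcoshpos)]
  rw [hsinh, hrw]
  have hNs : (N:ℝ) * s * sq = α := by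
    rw [hsdef]; field_simp
  rw [nsmul_eq_mul]
  rw [hk, hp, ← hNs]
  have e1 : μ * (1 / μ) = 1 := mul_one_div_cancel hμ.ne'
  have e2 : Real.cosh t * (Real.cosh t)⁻¹ = 1 := mul_inv_cancel₀ hcoshpos.ne'
  linear_combination (-(N:ℝ) * C * s * sq * Real.cosh t ^ (-(1 / μ)) * μ * (1 / μ)) * e2 + (-(N:ℝ) * C * s * sq * Real.cosh t ^ (-(1 / μ))) * e1
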